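/- Let $A = \theta I + U \in \mathrm{Mat}_n(F)$ where $U$ is strictly upper triangular over a field of fractions $F$ of rational functions in $t$ (with $\theta$ a scalar, $t$ a variable). Then each diagonal entry of $(A - tI)^{-1}$ equals $1/(\theta - t)$, and each strictly-above-diagonal entry of $(A - tI)^{-1}$, viewed as a rational function of $t$, is a linear combination $\sum_{k=2}^{n} d_k/(t - \theta)^k$ with $d_k \in F$ constants (i.e., its partial fraction expansion at $t = \theta$ has no term in $1/(t-\theta)$). -/

import Mathlib

set_option maxHeartbeats 1000000
set_option synthInstance.maxHeartbeats 400000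


theorem stmt9 (F : Type*) [Field F] (n : ℕ) (θ : F)
    (U : Matrix (Fin n) (Fin n) F) (hU : ∀ i j : Fin n, j ≤ i → U i j = 0)
    (A : Matrix (Fin n) (Fin n) F) (hA : A = θ • 1 + U)
    (B : Matrix (Fin n) (Fin n) (RatFunc F))
    (hB : B = A.map (RatFunc.C : F →+* RatFunc F) -
      Matrix.scalar (Fin n) (RatFunc.X : RatFunc F)) :
    (∀ i : Fin n, B⁻¹ i i = 1 / (RatFunc.C θ - RatFunc.X)) ∧
      (∀ i j : Fin n, i < j → ∃ d : ℕ → F,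
        B⁻¹ i j = ∑ k ∈ Finset.Icc 2 n, RatFunc.C (d k) / (RatFunc.X - RatFunc.C θ) ^ k) := by
  set c : RatFunc F := RatFunc.C θ - RatFunc.X with hc_def
  have hXC : (RatFunc.X : RatFunc F) ≠ RatFunc.C θ := by
    intro h
    have h2 : (Polynomial.X : Polynomial F) = Polynomial.C θ := by
      apply IsFractionRing.injective (Polynomial F) (RatFunc F)
      simpa [RatFunc.algebraMap_X, RatFunc.algebraMap_C] using h
    exact Polynomial.X_ne_C θ h2
  have hc : c ≠ 0 := sub_ne_zero.mpr (fun h => hXC h.symm)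
  set V : Matrix (Fin n) (Fin n) (RatFunc F) :=
    (RatFunc.C : F →+* RatFunc F).mapMatrix U with hV_def
  have hV : ∀ i j : Fin n, j ≤ i → V i j = 0 := by
    intro i j h
    simp [hV_def, RingHom.mapMatrix_apply, Matrix.map_apply, hU i j h]
  have hB' : B = c • 1 + V := by
    subst hB hA
    ext i j
    by_cases h : i = j <;>
      simp [h, Matrix.map_apply, Matrix.one_apply, Matrix.add_apply, Matrix.sub_apply,
        Matrix.smul_apply, Matrix.scalar_apply, Matrix.diagonal_apply, hV_def,
        RingHom.mapMatrix_apply, hc_def, map_add, map_mul] <;> ring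
  have hpow : ∀ (m : ℕ) (i j : Fin n), (j : ℕ) < (i : ℕ) + m → (V ^ m) i j = 0 := by
    intro m
    induction m with
    | zero =>
      intro i j h
      have : i ≠ j := by
        intro e; simp [e] at h
      simp [Matrix.one_apply, this]
    | succ m ih =>
      intro i j h
      rw [pow_succ, Matrix.mul_apply]
      apply Finset.sum_eq_zero
      intro k _
      by_cases hk : (k : ℕ) < (i : ℕ) + m
      · rw [ih i k hk, zero_mul]
      · push_neg at hk
        have : (j : ℕ) ≤ (k : ℕ) := by omega
        rw [hV k j (by exact_mod_cast this), mul_zero]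
  have hVn : V ^ n = 0 := by
    ext i j
    rw [hpow n i j (by omega)]
    simp
  set N : Matrix (Fin n) (Fin n) (RatFunc F) := (-(c⁻¹)) • V with hN_def
  have hNn : N ^ n = 0 := by
    rw [hN_def, smul_pow, hVn, smul_zero]
  set M : Matrix (Fin n) (Fin n) (RatFunc F) :=
    c⁻¹ • ∑ m ∈ Finset.range n, N ^ m with hM_def
  have hBM : B * M = 1 := by
    have hB'' : B = c • (1 - N) := by
      rw [hB', hN_def, smul_sub, smul_smul]
      rw [mul_neg, mul_inv_cancel₀ hc]
      simp [sub_eq_add_neg]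
    rw [hB'', hM_def, Matrix.smul_mul, Matrix.mul_smul, smul_smul,
      mul_inv_cancel₀ hc, mul_neg_geom_sum, hNn, sub_zero, one_smul]
  have hBinv : B⁻¹ = M := Matrix.inv_eq_right_inv hBM
  have hentry : ∀ i j : Fin n, B⁻¹ i j =
      ∑ m ∈ Finset.range n, c⁻¹ * ((-(c⁻¹)) ^ m * (V ^ m) i j) := by
    intro i j
    rw [hBinv, hM_def, Matrix.smul_apply, Matrix.sum_apply, Finset.smul_sum]
    apply Finset.sum_congr rfl
    intro m _
    rw [hN_def, smul_pow, Matrix.smul_apply, smul_eq_mul, smul_eq_mul]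
  constructor
  · intro i
    have hn1 : 0 < n := i.pos
    rw [hentry i i, Finset.sum_eq_single 0]
    · simp [hc]
    · intro m _ hm
      rw [hpow m i i (by omega), mul_zero, mul_zero]
    · intro h
      simp [Finset.mem_range, hn1] at h
  · intro i j hij
    refine ⟨fun k => -((U ^ (k - 1)) i j), ?_⟩
    have hVm : ∀ m : ℕ, (V ^ m) i j = RatFunc.C ((U ^ m) i j) := by
      intro m
      rw [hV_def, ← map_pow, RingHom.mapMatrix_apply, Matrix.map_apply]
    have hw : (RatFunc.X : RatFunc F) - RatFunc.C θ ≠ 0 :=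
      sub_ne_zero.mpr hXC
    rw [hentry i j]
    have hrw : (Finset.range n) = Finset.range ((n - 1) + 1) := by
      congr 1
      have := j.isLt
      omega
    rw [hrw, Finset.sum_range_succ']
    have h0 : c⁻¹ * ((-(c⁻¹)) ^ 0 * (V ^ 0) i j) = 0 := by
      have hz : (V ^ 0) i j = 0 := by
        simp [Matrix.one_apply, Fin.ne_of_lt hij]
      rw [hz]; simp
    rw [h0, add_zero]
    rw [← Finset.Ico_add_one_right_eq_Icc, Finset.sum_Ico_eq_sum_range]
    have hlen : n + 1 - 2 = n - 1 := by omega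
    rw [hlen]
    apply Finset.sum_congr rfl
    intro m _
    rw [hVm (m + 1)]
    simp only [show 2 + m - 1 = m + 1 from by omega, show m + 2 - 1 = m + 1 from by omega,
      show 2 + m = m + 2 from by omega]
    have hcw : c = -(RatFunc.X - RatFunc.C θ) := by rw [hc_def]; ring
    have h1 : -c⁻¹ = (RatFunc.X - RatFunc.C θ)⁻¹ := by
      rw [hcw, inv_neg, neg_neg]
    have h2 : c⁻¹ = -((RatFunc.X - RatFunc.C θ)⁻¹) := by
      rw [hcw, inv_neg]
    rw [h1, h2, map_neg, div_eq_mul_inv, ← inv_pow]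
    ring
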